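/- Let U ⊆ ℝⁿ be an open set, let m ≥ 1, and let f₁, …, f_m : U → ℝ be twice continuously differentiable functions that vanish nowhere on U and satisfy Σ_{k=1}^{m} f_k(x)² = 1 for all x ∈ U. Fix two distinct coordinate indices i ≠ j and functions p, q : U → ℝ, and suppose that for every k ∈ {1,…,m} and every x ∈ U the mixed partial derivative satisfies ∂²f_k/∂x_j∂x_i(x) = p(x)·∂f_k/∂x_i(x) + q(x)·∂f_k/∂x_j(x) + 2·f_k(x)^{−1}·∂f_k/∂x_i(x)·∂f_k/∂x_j(x). Then for all x ∈ U one has Σ_{k=1}^{m} f_k(x)·∂f_k/∂x_i(x) = 0 and Σ_{k=1}^{m} ∂f_k/∂x_i(x)·∂f_k/∂x_j(x) = 0. -/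

import Mathlib

/-- The partial derivative of `F : (Fin n → ℝ) → ℝ` in the `i`-th coordinate direction. -/
noncomputable def pd {n : ℕ} (i : Fin n) (F : (Fin n → ℝ) → ℝ) (x : Fin n → ℝ) : ℝ :=
  fderiv ℝ F x (Pi.single i 1)

/-- Intermediate claim in the proof of Theorem 5.1: if `f₁, …, f_m` are nowhere-vanishing
`C²` functions with `∑ f_k² = 1` satisfying the mixed-partial PDE
`∂²f_k/∂x_j∂x_i = p·∂f_k/∂x_i + q·∂f_k/∂x_j + 2 f_k⁻¹ ∂f_k/∂x_i ∂f_k/∂x_j`,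
then `∑ f_k ∂f_k/∂x_i = 0` and `∑ (∂f_k/∂x_i)(∂f_k/∂x_j) = 0` on `U`. -/
theorem totally_geodesic_orthogonality_step
    (n m : ℕ) (hm : 1 ≤ m)
    (U : Set (Fin n → ℝ)) (hUopen : IsOpen U)
    (f : Fin m → (Fin n → ℝ) → ℝ)
    (hC2 : ∀ k : Fin m, ContDiffOn ℝ 2 (f k) U)
    (hnz : ∀ k : Fin m, ∀ x ∈ U, f k x ≠ 0)
    (hsum : ∀ x ∈ U, (∑ k, (f k x) ^ 2) = 1)
    (i j : Fin n) (hij : i ≠ j)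
    (p q : (Fin n → ℝ) → ℝ)
    (hpde : ∀ k : Fin m, ∀ x ∈ U,
      pd j (fun z => pd i (f k) z) x
        = p x * pd i (f k) x + q x * pd j (f k) x
          + 2 * (f k x)⁻¹ * pd i (f k) x * pd j (f k) x) :
    ∀ x ∈ U, (∑ k, f k x * pd i (f k) x) = 0 ∧
      (∑ k, pd i (f k) x * pd j (f k) x) = 0 := by
  have hd : ∀ (k : Fin m) (x : Fin n → ℝ), x ∈ U → DifferentiableAt ℝ (f k) x := by
    intro k x hx
    exact ((hC2 k).contDiffAt (hUopen.mem_nhds hx)).differentiableAt (by norm_num)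
  -- key: for any direction a, ∑ f k * pd a (f k) = 0 on U
  have key : ∀ (a : Fin n), ∀ x ∈ U, (∑ k, f k x * pd a (f k) x) = 0 := by
    intro a x hx
    have hS : HasFDerivAt (fun z => ∑ k, f k z * f k z)
        (∑ k, ((f k x) • fderiv ℝ (f k) x + (f k x) • fderiv ℝ (f k) x)) x := by
      apply HasFDerivAt.fun_sum
      intro k _
      exact ((hd k x hx).hasFDerivAt).mul ((hd k x hx).hasFDerivAt)
    have hev : (fun z => ∑ k, f k z * f k z) =ᶠ[nhds x] fun _ => (1:ℝ) := by
      filter_upwards [hUopen.mem_nhds hx] with y hy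
      simpa [sq] using hsum y hy
    have h0 : fderiv ℝ (fun z => ∑ k, f k z * f k z) x = 0 := by
      rw [hev.fderiv_eq]; exact fderiv_const_apply 1
    have hD := hS.fderiv
    rw [h0] at hD
    have h1 := congrArg (fun L : (Fin n → ℝ) →L[ℝ] ℝ => L (Pi.single a 1)) hD.symm
    simp only [ContinuousLinearMap.coe_sum', Finset.sum_apply,
      ContinuousLinearMap.add_apply, ContinuousLinearMap.coe_smul',
      Pi.smul_apply, smul_eq_mul, ContinuousLinearMap.zero_apply] at h1
    have h2 : (2:ℝ) * ∑ k, f k x * pd a (f k) x = 0 := by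
      rw [Finset.mul_sum]
      rw [← h1]
      apply Finset.sum_congr rfl
      intro k _
      simp [pd]; ring
    linarith
  intro x hx
  refine ⟨key i x hx, ?_⟩
  -- differentiability of pd i (f k)
  have hdpd : ∀ (k : Fin m), DifferentiableAt ℝ (fun z => pd i (f k) z) x := by
    intro k
    have h2 : ContDiffAt ℝ 2 (f k) x := (hC2 k).contDiffAt (hUopen.mem_nhds hx)
    have hf1 : ContDiffAt ℝ 1 (fderiv ℝ (f k)) x := h2.fderiv_right (by norm_num)
    have hdf : DifferentiableAt ℝ (fderiv ℝ (f k)) x := hf1.differentiableAt one_ne_zero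
    exact hdf.clm_apply (differentiableAt_const _)
  have hT : HasFDerivAt (fun z => ∑ k, f k z * pd i (f k) z)
      (∑ k, ((f k x) • fderiv ℝ (fun z => pd i (f k) z) x
        + (pd i (f k) x) • fderiv ℝ (f k) x)) x := by
    apply HasFDerivAt.fun_sum
    intro k _
    exact ((hd k x hx).hasFDerivAt).mul ((hdpd k).hasFDerivAt)
  have hev : (fun z => ∑ k, f k z * pd i (f k) z) =ᶠ[nhds x] fun _ => (0:ℝ) := by
    filter_upwards [hUopen.mem_nhds hx] with y hy
    exact key i y hy
  have h0 : fderiv ℝ (fun z => ∑ k, f k z * pd i (f k) z) x = 0 := by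
    rw [hev.fderiv_eq]; exact fderiv_const_apply 0
  have hD := hT.fderiv
  rw [h0] at hD
  have h1 := congrArg (fun L : (Fin n → ℝ) →L[ℝ] ℝ => L (Pi.single j 1)) hD.symm
  simp only [ContinuousLinearMap.coe_sum', Finset.sum_apply,
    ContinuousLinearMap.add_apply, ContinuousLinearMap.coe_smul',
    Pi.smul_apply, smul_eq_mul, ContinuousLinearMap.zero_apply] at h1
  -- h1 : 0 = ∑ k, (f k x * pd j (pd i (f k)) x + pd i (f k) x * pd j (f k) x)
  have h2 : (∑ k, (p x * (f k x * pd i (f k) x) + q x * (f k x * pd j (f k) x)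
      + 3 * (pd i (f k) x * pd j (f k) x))) = 0 := by
    rw [← h1]
    apply Finset.sum_congr rfl
    intro k _
    have hp := hpde k x hx
    have hfk := hnz k x hx
    have : f k x * pd j (fun z => pd i (f k) z) x
        = p x * (f k x * pd i (f k) x) + q x * (f k x * pd j (f k) x)
          + 2 * (pd i (f k) x * pd j (f k) x) := by
      rw [hp]; field_simp
    calc p x * (f k x * pd i (f k) x) + q x * (f k x * pd j (f k) x)
          + 3 * (pd i (f k) x * pd j (f k) x)
        = f k x * pd j (fun z => pd i (f k) z) x + pd i (f k) x * pd j (f k) x := by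
          rw [this]; ring
      _ = f k x * fderiv ℝ (fun z => pd i (f k) z) x (Pi.single j 1)
          + pd i (f k) x * fderiv ℝ (f k) x (Pi.single j 1) := rfl
  have h3 : p x * (∑ k, f k x * pd i (f k) x)
      + q x * (∑ k, f k x * pd j (f k) x) + 3 * (∑ k, pd i (f k) x * pd j (f k) x) = 0 := by
    rw [← h2, Finset.sum_add_distrib, Finset.sum_add_distrib,
      Finset.mul_sum, Finset.mul_sum, Finset.mul_sum]
  rw [key i x hx, key j x hx] at h3
  linarith
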